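/- arXiv:1505.04167 — 3 statements merged into one kernel-verified Lean document; each statement's English description precedes it below -/
import Mathlib

section
/- For all α > 0, β > 0 and u ∈ ℝ, the function z ↦ (e^{iuz} − 1) z^{-1} e^{-βz} is integrable on (0,∞) and exp(α ∫_0^∞ (e^{iuz} − 1) z^{-1} e^{-βz} dz) = (1 − iu/β)^{-α}, where the complex power is the principal branch. -/
open MeasureTheory Real Complex

open Set Filter Topology

lemma cexp_integral_Ioi (c : ℂ) (hc : c.re < 0) :
    ∫ z in Set.Ioi (0:ℝ), Complex.exp (c * z) = -c⁻¹ := by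
  have hc0 : c ≠ 0 := fun h => by simp [h] at hc
  have hderiv : ∀ x ∈ Set.Ioi (0:ℝ), HasDerivAt (fun z : ℝ => c⁻¹ * Complex.exp (c * z))
      (Complex.exp (c * x)) x := by
    intro x _
    have h1 : HasDerivAt (fun w : ℂ => Complex.exp (c * w)) (c * Complex.exp (c * x)) (x:ℂ) := by
      simpa [mul_comm] using ((hasDerivAt_id (x:ℂ)).const_mul c).cexp
    have h2 := (h1.comp_ofReal).const_mul c⁻¹
    simpa [← mul_assoc, inv_mul_cancel₀ hc0] using h2
  have hint : IntegrableOn (fun z : ℝ => Complex.exp (c * z)) (Set.Ioi 0) := by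
    have hg : IntegrableOn (fun z : ℝ => Real.exp (-(-c.re) * z)) (Set.Ioi 0) :=
      exp_neg_integrableOn_Ioi 0 (by linarith)
    refine Integrable.mono' hg ?_ ?_
    · exact (Complex.continuous_exp.comp (by continuity)).aestronglyMeasurable
    · refine ae_of_all _ fun z => le_of_eq ?_
      rw [Complex.norm_exp]
      simp [Complex.mul_re]
  have htend : Tendsto (fun z : ℝ => c⁻¹ * Complex.exp (c * z)) atTop (𝓝 0) := by
    rw [tendsto_zero_iff_norm_tendsto_zero]
    have heq : (fun z : ℝ => ‖c⁻¹ * Complex.exp (c * z)‖) = fun z => ‖c⁻¹‖ * Real.exp (c.re * z) := by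
      funext z
      rw [norm_mul, Complex.norm_exp]
      simp [Complex.mul_re]
    rw [heq]
    simpa using (Real.tendsto_exp_atBot.comp
      ((tendsto_const_mul_atBot_of_neg hc).mpr tendsto_id)).const_mul ‖c⁻¹‖
  have := integral_Ioi_of_hasDerivAt_of_tendsto
    (Continuous.continuousWithinAt (by continuity)) hderiv hint htend
  simpa using this

lemma gk_ne (β u : ℝ) (hβ : 0 < β) (v : ℝ) : (β:ℂ) - v * Complex.I ≠ 0 := by
  intro h
  have := congrArg Complex.re h
  simp [Complex.mul_re] at this
  linarith

lemma interval_part (β u : ℝ) (hβ : 0 < β) :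
    ∫ v in (0:ℝ)..u, Complex.I * ((β:ℂ) - v * Complex.I)⁻¹ =
      Complex.log β - Complex.log ((β:ℂ) - u * Complex.I) := by
  have key : ∀ v : ℝ, HasDerivAt (fun v : ℝ => -Complex.log ((β:ℂ) - v * Complex.I))
      (Complex.I * ((β:ℂ) - v * Complex.I)⁻¹) v := by
    intro v
    have h0 : HasDerivAt (fun v : ℝ => ((v:ℝ):ℂ)) 1 v := by
      simpa using (hasDerivAt_id v).ofReal_comp
    have h1 : HasDerivAt (fun v : ℝ => (β:ℂ) - v * Complex.I) (-Complex.I) v := by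
      simpa using ((h0.mul_const Complex.I).const_sub (β:ℂ))
    have hmem : (β:ℂ) - v * Complex.I ∈ Complex.slitPlane := by
      rw [Complex.mem_slitPlane_iff]
      left
      simp [Complex.mul_re]
      exact hβ
    have h2 := (h1.clog_real hmem).neg
    refine h2.congr_deriv ?_
    rw [neg_div, neg_neg, div_eq_mul_inv]
  have hcont : Continuous fun v : ℝ => Complex.I * ((β:ℂ) - v * Complex.I)⁻¹ := by
    refine continuous_const.mul (Continuous.inv₀ ?_ (gk_ne β u hβ))
    continuity
  rw [intervalIntegral.integral_eq_sub_of_hasDerivAt (fun v _ => key v)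
    (hcont.intervalIntegrable 0 u)]
  simp
  ring

lemma pointwise_eq (β u : ℝ) {z : ℝ} (hz : 0 < z) :
    (Complex.exp (u * z * Complex.I) - 1) * (z:ℂ)⁻¹ * Complex.exp (-β * z)
      = ∫ v in (0:ℝ)..u, Complex.I * Complex.exp (((v:ℂ) * Complex.I - β) * z) := by
  have hz0 : (z:ℂ) ≠ 0 := Complex.ofReal_ne_zero.mpr hz.ne'
  have hIz : Complex.I * (z:ℂ) ≠ 0 := mul_ne_zero Complex.I_ne_zero hz0
  have hpt : Set.EqOn (fun v : ℝ => Complex.I * Complex.exp (((v:ℂ) * Complex.I - β) * z))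
      (fun v : ℝ => (Complex.I * Complex.exp (-β * z)) * Complex.exp ((Complex.I * z) * v))
      (Set.uIcc 0 u) := by
    intro v _
    simp only
    rw [mul_assoc, ← Complex.exp_add]
    ring_nf
  rw [intervalIntegral.integral_congr hpt, intervalIntegral.integral_const_mul,
    integral_exp_mul_complex hIz]
  have h1 : Complex.I * (z:ℂ) * u = u * z * Complex.I := by ring
  rw [h1]
  rw [show ((0:ℝ):ℂ) = 0 from Complex.ofReal_zero, mul_zero, Complex.exp_zero]
  field_simp

lemma swap_part (β : ℝ) (hβ : 0 < β) (a b : ℝ) :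
    ∫ z in Set.Ioi (0:ℝ), ∫ v in Set.Ioc a b,
        Complex.I * Complex.exp (((v:ℂ) * Complex.I - β) * z)
      = ∫ v in Set.Ioc a b, ∫ z in Set.Ioi (0:ℝ),
        Complex.I * Complex.exp (((v:ℂ) * Complex.I - β) * z) := by
  apply MeasureTheory.integral_integral_swap
  have hcont : Continuous (Function.uncurry fun (z v : ℝ) =>
      Complex.I * Complex.exp (((v:ℂ) * Complex.I - β) * z)) := by
    apply continuous_const.mul
    apply Complex.continuous_exp.comp
    apply Continuous.mul
    · exact ((Complex.continuous_ofReal.comp continuous_snd).mul continuous_const).sub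
        continuous_const
    · exact Complex.continuous_ofReal.comp continuous_fst
  have hg : Integrable (fun p : ℝ × ℝ => Real.exp (-β * p.1) * (1:ℝ))
      ((volume.restrict (Set.Ioi 0)).prod (volume.restrict (Set.Ioc a b))) :=
    Integrable.mul_prod (exp_neg_integrableOn_Ioi 0 hβ) (integrable_const 1)
  refine Integrable.mono' hg hcont.aestronglyMeasurable ?_
  refine ae_of_all _ fun p => le_of_eq ?_
  rw [Function.uncurry, norm_mul, Complex.norm_I,
    one_mul, Complex.norm_exp]
  simp [Complex.mul_re, Complex.sub_re, Complex.mul_im]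

lemma abs_bound (u : ℝ) {z : ℝ} (hz : 0 < z) :
    ‖Complex.exp ((u:ℂ) * z * Complex.I) - 1‖ ≤ 2 * |u| * z := by
  have habs : ‖(u:ℂ) * z * Complex.I‖ = |u| * z := by
    rw [norm_mul, norm_mul, Complex.norm_I, Complex.norm_real, Complex.norm_real,
      Real.norm_eq_abs, Real.norm_eq_abs, abs_of_pos hz, mul_one]
  rcases le_or_gt (‖(u:ℂ) * z * Complex.I‖) 1 with h | h
  · have := Complex.norm_exp_sub_one_le h
    rw [habs] at this
    linarith
  · have h2 : ‖Complex.exp ((u:ℂ) * z * Complex.I) - 1‖ ≤ 2 := by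
      refine (norm_sub_le _ _).trans ?_
      rw [Complex.norm_exp, norm_one]
      have : ((u:ℂ) * z * Complex.I).re = 0 := by simp [Complex.mul_re, Complex.mul_im]
      rw [this, Real.exp_zero]
      norm_num
    rw [habs] at h
    nlinarith

lemma gk_integrable (β u : ℝ) (hβ : 0 < β) :
    IntegrableOn
      (fun z : ℝ => (Complex.exp (u * z * Complex.I) - 1) * (z : ℂ)⁻¹
        * Complex.exp (-β * z)) (Set.Ioi 0) volume := by
  have hg : IntegrableOn (fun z : ℝ => 2 * |u| * Real.exp (-β * z)) (Set.Ioi 0) :=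
    (exp_neg_integrableOn_Ioi 0 hβ).const_mul (2 * |u|)
  refine Integrable.mono' hg ?_ ?_
  · refine ContinuousOn.aestronglyMeasurable ?_ measurableSet_Ioi
    refine ContinuousOn.mul (ContinuousOn.mul ?_ ?_) ?_
    · exact ((Complex.continuous_exp.comp (by continuity)).sub continuous_const).continuousOn
    · exact ContinuousOn.inv₀ Complex.continuous_ofReal.continuousOn
        fun z hz => Complex.ofReal_ne_zero.mpr (ne_of_gt hz)
    · exact (Complex.continuous_exp.comp (by continuity)).continuousOn
  · filter_upwards [ae_restrict_mem measurableSet_Ioi] with z hz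
    rw [Set.mem_Ioi] at hz
    rw [norm_mul, norm_mul, Complex.norm_exp]
    have hre : ((-β : ℂ) * z).re = -β * z := by simp [Complex.mul_re]
    rw [hre]
    have h1 : ‖(z:ℂ)⁻¹‖ = z⁻¹ := by
      rw [norm_inv, Complex.norm_real, Real.norm_eq_abs, abs_of_pos hz]
    rw [h1]
    have h2 := abs_bound u hz
    have h3 : ‖Complex.exp ((u:ℂ) * z * Complex.I) - 1‖ * z⁻¹ ≤ 2 * |u| := by
      rw [← mul_le_mul_iff_of_pos_right hz]
      calc ‖Complex.exp ((u:ℂ) * z * Complex.I) - 1‖ * z⁻¹ * z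
          = ‖Complex.exp ((u:ℂ) * z * Complex.I) - 1‖ := by
            field_simp
        _ ≤ 2 * |u| * z := h2
    calc ‖Complex.exp ((u:ℂ) * z * Complex.I) - 1‖ * z⁻¹ * Real.exp (-β * z)
        ≤ 2 * |u| * Real.exp (-β * z) := by
          apply mul_le_mul_of_nonneg_right h3 (Real.exp_pos _).le

lemma gk_integral (β u : ℝ) (hβ : 0 < β) :
    ∫ z in Set.Ioi (0:ℝ),
        (Complex.exp (u * z * Complex.I) - 1) * (z : ℂ)⁻¹ * Complex.exp (-β * z)
      = Complex.log β - Complex.log ((β:ℂ) - u * Complex.I) := by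
  rw [MeasureTheory.setIntegral_congr_fun measurableSet_Ioi
    (fun z hz => pointwise_eq β u (Set.mem_Ioi.mp hz))]
  have inner : ∀ v : ℝ, ∫ z in Set.Ioi (0:ℝ),
      Complex.I * Complex.exp (((v:ℂ) * Complex.I - β) * z)
      = Complex.I * ((β:ℂ) - v * Complex.I)⁻¹ := by
    intro v
    rw [MeasureTheory.integral_const_mul, cexp_integral_Ioi ((v:ℂ) * Complex.I - β)
      (by simp [Complex.mul_re]; linarith)]
    rw [show -(((v:ℂ) * Complex.I - β))⁻¹ = ((β:ℂ) - v * Complex.I)⁻¹ by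
      rw [← inv_neg, neg_sub]]
  rcases le_total 0 u with hu | hu
  · simp_rw [intervalIntegral.integral_of_le hu]
    rw [swap_part β hβ 0 u]
    simp_rw [inner]
    rw [← intervalIntegral.integral_of_le hu, interval_part β u hβ]
  · simp_rw [intervalIntegral.integral_of_ge hu]
    rw [MeasureTheory.integral_neg, swap_part β hβ u 0]
    simp_rw [inner]
    rw [← intervalIntegral.integral_of_ge hu, interval_part β u hβ]


/-- Lévy–Khintchine form of the Gamma characteristic function: for `α, β > 0` and `u ∈ ℝ`,
the function `z ↦ (e^{iuz} − 1) z⁻¹ e^{-βz}` is integrable on `(0,∞)` and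
`exp(α ∫_0^∞ (e^{iuz} − 1) z⁻¹ e^{-βz} dz) = (1 − iu/β)^{-α}` (principal branch). -/
theorem gamma_levy_khintchine
    (α β u : ℝ) (hα : 0 < α) (hβ : 0 < β) :
    IntegrableOn
      (fun z : ℝ => (Complex.exp (u * z * Complex.I) - 1) * (z : ℂ)⁻¹
        * Complex.exp (-β * z)) (Set.Ioi 0) volume
    ∧ Complex.exp ((α : ℂ) *
        ∫ z in Set.Ioi (0 : ℝ),
          (Complex.exp (u * z * Complex.I) - 1) * (z : ℂ)⁻¹ * Complex.exp (-β * z))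
      = (1 - u * Complex.I / β) ^ (-(α : ℂ)) := by
  refine ⟨gk_integrable β u hβ, ?_⟩
  have hb : (β:ℂ) ≠ 0 := Complex.ofReal_ne_zero.mpr hβ.ne'
  have hw : (1:ℂ) - u * Complex.I / β ≠ 0 := by
    intro h
    have h2 : (β:ℂ) - u * Complex.I = 0 := by
      have := congrArg (fun w : ℂ => w * (β:ℂ)) h
      simpa [sub_mul, div_mul_cancel₀, hb] using this
    have := congrArg Complex.re h2
    simp [Complex.mul_re] at this
    linarith
  have hfact : ((β:ℝ):ℂ) * (1 - u * Complex.I / β) = (β:ℂ) - u * Complex.I := by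
    field_simp
  have hlog : Complex.log ((β:ℂ) - u * Complex.I)
      = Real.log β + Complex.log (1 - u * Complex.I / β) := by
    rw [← hfact, Complex.log_ofReal_mul hβ hw]
  rw [gk_integral β u hβ, hlog, ← Complex.ofReal_log hβ.le,
    Complex.cpow_def_of_ne_zero hw]
  congr 1
  ring
end

section
/- Let a > 0 and λ > 0, and let I : [0,∞) → [0,∞) be a continuous function satisfying I(t) ≥ a² + λ² ∫_0^t (t−s) I(s) ds for all t ≥ 0. Then I(t) ≥ a² cosh(λt) for all t ≥ 0; in particular, there exists t₀ > 0 such that I(t) ≥ (a²/2) e^{λt} for all t ≥ t₀. -/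
open MeasureTheory Real Filter intervalIntegral Nat

private lemma integral_sub_mul_pow (t : ℝ) (m : ℕ) :
    ∫ s in (0:ℝ)..t, (t - s) * s ^ m
      = t ^ (m + 2) / ((m + 1) * (m + 2)) := by
  have h1 : ∀ s : ℝ, (t - s) * s ^ m = t * s ^ m - s ^ (m + 1) := by
    intro s; ring
  simp only [h1]
  rw [intervalIntegral.integral_sub, intervalIntegral.integral_const_mul,
    integral_pow, integral_pow]
  · have h1' : (m:ℝ) + 1 ≠ 0 := by positivity
    have h2' : (m:ℝ) + 2 ≠ 0 := by positivity
    have h3' : (m:ℝ) + 1 + 1 ≠ 0 := by positivity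
    simp only [ne_eq, Nat.add_eq_zero_iff, one_ne_zero, and_false, not_false_eq_true, zero_pow, sub_zero, Nat.cast_add, Nat.cast_one]
    rw [mul_div_assoc', div_sub_div _ _ h1' h3', div_eq_div_iff (mul_ne_zero h1' h3') (mul_ne_zero h1' h2')]
    ring
  · exact (continuous_const.mul (continuous_pow m)).intervalIntegrable 0 t
  · exact (continuous_pow (m + 1)).intervalIntegrable 0 t

/-- If `I` is continuous, nonnegative on `[0,∞)` and satisfies the renewal inequality
`I(t) ≥ a² + λ² ∫_0^t (t−s) I(s) ds`, then `I(t) ≥ a² cosh(λt)`; in particular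
`I(t) ≥ (a²/2) e^{λt}` for all large `t`. -/
theorem renewal_inequality_lower_bound
    (a lam : ℝ) (ha : 0 < a) (hlam : 0 < lam)
    (I : ℝ → ℝ) (hI : ContinuousOn I (Set.Ici 0))
    (hInonneg : ∀ t : ℝ, 0 ≤ t → 0 ≤ I t)
    (hineq : ∀ t : ℝ, 0 ≤ t →
      a ^ 2 + lam ^ 2 * ∫ s in (0 : ℝ)..t, (t - s) * I s ≤ I t) :
    (∀ t : ℝ, 0 ≤ t → a ^ 2 * Real.cosh (lam * t) ≤ I t)
    ∧ ∃ t₀ : ℝ, 0 < t₀ ∧ ∀ t : ℝ, t₀ ≤ t → (a ^ 2 / 2) * Real.exp (lam * t) ≤ I t := by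
  -- partial sums bound
  have key : ∀ n : ℕ, ∀ t : ℝ, 0 ≤ t →
      a ^ 2 * ∑ k ∈ Finset.range n, (lam * t) ^ (2 * k) / ((2 * k)! : ℝ) ≤ I t := by
    intro n
    induction n with
    | zero => intro t ht; simpa using hInonneg t ht
    | succ n ih =>
      intro t ht
      -- integrability of (t - s) * I s on [0, t]
      have hIint : IntervalIntegrable (fun s => (t - s) * I s) volume 0 t := by
        apply ContinuousOn.intervalIntegrable
        apply ContinuousOn.mul (by fun_prop)
        exact hI.mono (by rw [Set.uIcc_of_le ht]; exact fun x hx => hx.1)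
      set S : ℝ → ℝ := fun s => ∑ k ∈ Finset.range n, (lam * s) ^ (2 * k) / ((2 * k)! : ℝ)
        with hS
      have hSint : IntervalIntegrable (fun s => (t - s) * (a ^ 2 * S s)) volume 0 t := by
        apply Continuous.intervalIntegrable
        fun_prop
      have hmono : ∫ s in (0:ℝ)..t, (t - s) * (a ^ 2 * S s)
          ≤ ∫ s in (0:ℝ)..t, (t - s) * I s := by
        apply intervalIntegral.integral_mono_on ht hSint hIint
        intro s hs
        have h1 : 0 ≤ t - s := by linarith [hs.2]
        exact mul_le_mul_of_nonneg_left (ih s hs.1) h1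
      -- compute the left integral
      have hcomp : ∫ s in (0:ℝ)..t, (t - s) * (a ^ 2 * S s)
          = a ^ 2 * ∑ k ∈ Finset.range n,
              (lam ^ (2 * k) / ((2 * k)! : ℝ)) * (t ^ (2 * k + 2) / ((2 * k + 1) * (2 * k + 2))) := by
        have : ∀ s : ℝ, (t - s) * (a ^ 2 * S s)
            = ∑ k ∈ Finset.range n,
                a ^ 2 * (lam ^ (2 * k) / ((2 * k)! : ℝ)) * ((t - s) * s ^ (2 * k)) := by
          intro s
          rw [hS, Finset.mul_sum, Finset.mul_sum]
          refine Finset.sum_congr rfl fun k _ => ?_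
          rw [mul_pow]
          ring
        simp only [this]
        rw [intervalIntegral.integral_finset_sum]
        · rw [Finset.mul_sum]
          refine Finset.sum_congr rfl fun k _ => ?_
          rw [intervalIntegral.integral_const_mul, integral_sub_mul_pow]
          push_cast
          ring
        · intro k _
          apply Continuous.intervalIntegrable
          fun_prop
      have hstep := hineq t ht
      have hfinal : a ^ 2 + lam ^ 2 * ∫ s in (0:ℝ)..t, (t - s) * (a ^ 2 * S s)
          = a ^ 2 * ∑ k ∈ Finset.range (n + 1), (lam * t) ^ (2 * k) / ((2 * k)! : ℝ) := by
        rw [hcomp, Finset.sum_range_succ']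
        simp only [Nat.mul_zero, pow_zero, Nat.factorial_zero]
        rw [Finset.mul_sum, Finset.mul_sum, mul_add]
        have : ∀ k ∈ Finset.range n,
            lam ^ 2 * (a ^ 2 * ((lam ^ (2 * k) / ((2 * k)! : ℝ))
              * (t ^ (2 * k + 2) / ((2 * k + 1) * (2 * k + 2)))))
            = a ^ 2 * ((lam * t) ^ (2 * (k + 1)) / ((2 * (k + 1))! : ℝ)) := by
          intro k _
          have hfac : ((2 * (k + 1))! : ℝ)
              = ((2 * k + 2) : ℝ) * ((2 * k + 1) : ℝ) * ((2 * k)! : ℝ) := by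
            have : 2 * (k + 1) = (2 * k + 1) + 1 := by ring
            rw [this, Nat.factorial_succ, Nat.factorial_succ]
            push_cast
            ring
          rw [hfac, mul_pow]
          have h2k1 : (0:ℝ) < (2 * k + 1 : ℝ) := by positivity
          have h2k2 : (0:ℝ) < (2 * k + 2 : ℝ) := by positivity
          have hf : (0:ℝ) < ((2 * k)! : ℝ) := by positivity
          field_simp
          ring
        rw [Finset.sum_congr rfl this, Finset.mul_sum]
        ring
      rw [← hfinal]
      calc a ^ 2 + lam ^ 2 * ∫ s in (0:ℝ)..t, (t - s) * (a ^ 2 * S s)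
          ≤ a ^ 2 + lam ^ 2 * ∫ s in (0:ℝ)..t, (t - s) * I s := by
            have := mul_le_mul_of_nonneg_left hmono (le_of_lt (by positivity : (0:ℝ) < lam ^ 2))
            linarith
        _ ≤ I t := hstep
  have main : ∀ t : ℝ, 0 ≤ t → a ^ 2 * Real.cosh (lam * t) ≤ I t := by
    intro t ht
    have hsum := (Real.hasSum_cosh (lam * t)).tendsto_sum_nat
    have htend : Tendsto (fun n => a ^ 2 *
        ∑ k ∈ Finset.range n, (lam * t) ^ (2 * k) / ((2 * k)! : ℝ)) atTop
        (nhds (a ^ 2 * Real.cosh (lam * t))) := hsum.const_mul _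
    exact le_of_tendsto htend (Filter.Eventually.of_forall fun n => key n t ht)
  refine ⟨main, 1, one_pos, fun t ht => ?_⟩
  have ht0 : (0:ℝ) ≤ t := by linarith
  calc (a ^ 2 / 2) * Real.exp (lam * t) ≤ a ^ 2 * Real.cosh (lam * t) := by
        rw [Real.cosh_eq]
        have := (Real.exp_pos (-(lam * t))).le
        nlinarith [sq_nonneg a]
    _ ≤ I t := main t ht0
end

section
/- Let G(t,x) = (1/2)·1_{{|x| ≤ t}} for t > 0, x ∈ ℝ, let b : ℝ → ℝ be Lipschitz continuous with constant L, and let β > 0. For a function Φ : [0,∞) × ℝ → ℝ set ‖Φ‖_β := sup_{t≥0, x∈ℝ} e^{-βt} |Φ(t,x)|. Then for any measurable functions u, v : [0,∞) × ℝ → ℝ with ‖u‖_β < ∞ and ‖v‖_β < ∞, one has for all t ≥ 0, x ∈ ℝ: e^{-βt} |∫_0^t ∫_ℝ G(t-s, x-y)[b(u(s,y)) − b(v(s,y))] dy ds| ≤ (L/β²) ‖u − v‖_β. -/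
open MeasureTheory Real

/-- Lipschitz estimate for the space–time convolution with the wave kernel
`G(t,x) = (1/2)·1_{|x| ≤ t}` in the weighted sup norm
`‖Φ‖_β = sup_{t≥0, x∈ℝ} e^{-βt}|Φ(t,x)|`: if `b` is `L`-Lipschitz then
`e^{-βt} |∫_0^t ∫_ℝ G(t-s,x-y)[b(u(s,y)) − b(v(s,y))] dy ds| ≤ (L/β²) ‖u − v‖_β`. -/
theorem wave_convolution_lipschitz_estimate
    (G : ℝ → ℝ → ℝ) (hG : ∀ t x : ℝ, G t x = if |x| ≤ t then 1 / 2 else 0)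
    (b : ℝ → ℝ) (L β : ℝ) (hβ : 0 < β) (hL : 0 ≤ L)
    (hb : ∀ x y : ℝ, |b x - b y| ≤ L * |x - y|)
    (u v : ℝ → ℝ → ℝ)
    (hum : Measurable (Function.uncurry u)) (hvm : Measurable (Function.uncurry v))
    (hu : BddAbove (Set.range fun p : {t : ℝ // 0 ≤ t} × ℝ =>
      Real.exp (-β * p.1.1) * |u p.1.1 p.2|))
    (hv : BddAbove (Set.range fun p : {t : ℝ // 0 ≤ t} × ℝ =>
      Real.exp (-β * p.1.1) * |v p.1.1 p.2|)) :
    ∀ t : ℝ, 0 ≤ t → ∀ x : ℝ,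
      Real.exp (-β * t) *
        |∫ s in (0 : ℝ)..t, ∫ y : ℝ, G (t - s) (x - y) * (b (u s y) - b (v s y))|
      ≤ (L / β ^ 2) *
        ⨆ p : {t : ℝ // 0 ≤ t} × ℝ, Real.exp (-β * p.1.1) * |u p.1.1 p.2 - v p.1.1 p.2| := by
  intro t ht x
  set M := ⨆ p : {t : ℝ // 0 ≤ t} × ℝ,
    Real.exp (-β * p.1.1) * |u p.1.1 p.2 - v p.1.1 p.2| with hM
  -- boundedness of the derived family
  obtain ⟨Cu, hCu⟩ := hu
  obtain ⟨Cv, hCv⟩ := hv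
  have hbdd : BddAbove (Set.range fun p : {t : ℝ // 0 ≤ t} × ℝ =>
      Real.exp (-β * p.1.1) * |u p.1.1 p.2 - v p.1.1 p.2|) := by
    refine ⟨Cu + Cv, ?_⟩
    rintro _ ⟨p, rfl⟩
    have h1 := hCu (Set.mem_range_self p)
    have h2 := hCv (Set.mem_range_self p)
    have h3 : Real.exp (-β * p.1.1) * |u p.1.1 p.2 - v p.1.1 p.2|
        ≤ Real.exp (-β * p.1.1) * |u p.1.1 p.2| + Real.exp (-β * p.1.1) * |v p.1.1 p.2| := by
      rw [← mul_add]
      exact mul_le_mul_of_nonneg_left (abs_sub _ _) (Real.exp_nonneg _)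
    dsimp at h1 h2 ⊢
    exact h3.trans (add_le_add h1 h2)
  have hM0 : 0 ≤ M := by
    have := le_ciSup hbdd (⟨⟨0, le_refl 0⟩, 0⟩ : {t : ℝ // 0 ≤ t} × ℝ)
    refine le_trans ?_ this
    positivity
  have hMb : ∀ s : ℝ, 0 ≤ s → ∀ y : ℝ, |u s y - v s y| ≤ Real.exp (β * s) * M := by
    intro s hs y
    have h := le_ciSup hbdd (⟨⟨s, hs⟩, y⟩ : {t : ℝ // 0 ≤ t} × ℝ)
    dsimp at h
    have hexp : Real.exp (β * s) * (Real.exp (-β * s) * |u s y - v s y|)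
        = |u s y - v s y| := by
      rw [← mul_assoc, ← Real.exp_add]
      simp
    calc |u s y - v s y| = Real.exp (β * s) * (Real.exp (-β * s) * |u s y - v s y|) :=
          hexp.symm
      _ ≤ Real.exp (β * s) * M :=
          mul_le_mul_of_nonneg_left h (Real.exp_nonneg _)
  -- bound on the inner integral
  have inner : ∀ s : ℝ, 0 ≤ s → s ≤ t →
      ‖∫ y : ℝ, G (t - s) (x - y) * (b (u s y) - b (v s y))‖
        ≤ L * M * (Real.exp (β * s) * (t - s)) := by
    intro s hs hst
    set C := 1 / 2 * (L * (Real.exp (β * s) * M)) with hC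
    have hC0 : 0 ≤ C := by positivity
    set I := Set.Icc (x - (t - s)) (x + (t - s)) with hI
    have hgint : Integrable (I.indicator fun _ : ℝ => C) := by
      rw [integrable_indicator_iff measurableSet_Icc]
      exact integrableOn_const measure_Icc_lt_top.ne
    have hbound : ∀ y : ℝ, ‖G (t - s) (x - y) * (b (u s y) - b (v s y))‖
        ≤ I.indicator (fun _ : ℝ => C) y := by
      intro y
      rw [hG]
      by_cases h : |x - y| ≤ t - s
      · rw [if_pos h]
        have hy : y ∈ I := by
          rw [hI, Set.mem_Icc]
          rw [abs_le] at h
          constructor <;> linarith [h.1, h.2]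
        rw [Set.indicator_of_mem hy]
        have h1 := hb (u s y) (v s y)
        have h2 := hMb s hs y
        have h3 : |b (u s y) - b (v s y)| ≤ L * (Real.exp (β * s) * M) := by
          calc |b (u s y) - b (v s y)| ≤ L * |u s y - v s y| := h1
            _ ≤ L * (Real.exp (β * s) * M) := mul_le_mul_of_nonneg_left h2 hL
        rw [Real.norm_eq_abs, abs_mul]
        rw [abs_of_nonneg (by norm_num : (0:ℝ) ≤ 1 / 2)]
        rw [hC]
        nlinarith [abs_nonneg (b (u s y) - b (v s y))]
      · rw [if_neg h, zero_mul, norm_zero]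
        exact Set.indicator_nonneg (fun _ _ => hC0) y
    calc ‖∫ y : ℝ, G (t - s) (x - y) * (b (u s y) - b (v s y))‖
        ≤ ∫ y : ℝ, I.indicator (fun _ : ℝ => C) y :=
          norm_integral_le_of_norm_le hgint (Filter.Eventually.of_forall hbound)
      _ = (volume I).toReal • C := integral_indicator_const _ measurableSet_Icc
      _ = (2 * (t - s)) * C := by
          rw [hI, Real.volume_Icc, smul_eq_mul]
          congr 1
          rw [ENNReal.toReal_ofReal (by linarith)]
          ring
      _ = L * M * (Real.exp (β * s) * (t - s)) := by rw [hC]; ring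
  -- the outer integral bound
  set g := fun s : ℝ => L * M * (Real.exp (β * s) * (t - s)) with hg
  have hgcont : Continuous g := by
    apply Continuous.mul continuous_const
    exact ((Real.continuous_exp.comp (continuous_const.mul continuous_id)).mul
      (continuous_const.sub continuous_id))
  have hgint : IntervalIntegrable g volume 0 t := hgcont.intervalIntegrable 0 t
  have hae : ∀ᵐ s ∂(volume.restrict (Set.uIoc (0:ℝ) t)),
      ‖∫ y : ℝ, G (t - s) (x - y) * (b (u s y) - b (v s y))‖ ≤ g s := by
    rw [Set.uIoc_of_le ht]
    refine (ae_restrict_iff' measurableSet_Ioc).mpr (Filter.Eventually.of_forall ?_)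
    intro s hs
    exact inner s hs.1.le hs.2
  have houter : |∫ s in (0:ℝ)..t, ∫ y : ℝ, G (t - s) (x - y) * (b (u s y) - b (v s y))|
      ≤ |∫ s in (0:ℝ)..t, g s| := by
    have := intervalIntegral.norm_integral_le_abs_of_norm_le hae hgint
    simpa using this
  -- compute the integral of g via FTC
  have hβ2 : (β : ℝ) ≠ 0 := ne_of_gt hβ
  set H := fun s : ℝ => ((t - s) / β + 1 / β ^ 2) * Real.exp (β * s) with hH
  have hderiv : ∀ s ∈ Set.uIcc (0:ℝ) t, HasDerivAt H (Real.exp (β * s) * (t - s)) s := by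
    intro s _
    have h1 : HasDerivAt (fun s : ℝ => Real.exp (β * s)) (Real.exp (β * s) * β) s := by
      have := (Real.hasDerivAt_exp (β * s)).comp s ((hasDerivAt_id s).const_mul β)
      exact this.congr_deriv (by ring)
    have h2 : HasDerivAt (fun s : ℝ => (t - s) / β + 1 / β ^ 2) (-1 / β) s := by
      have := (((hasDerivAt_id s).const_sub t).div_const β).add_const (1 / β ^ 2)
      simpa using this
    have := h2.mul h1
    refine HasDerivAt.congr_deriv this ?_
    field_simp
    ring
  have hExpint : ∫ s in (0:ℝ)..t, Real.exp (β * s) * (t - s)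
      = Real.exp (β * t) / β ^ 2 - t / β - 1 / β ^ 2 := by
    have hcont : IntervalIntegrable (fun s : ℝ => Real.exp (β * s) * (t - s)) volume 0 t :=
      (((Real.continuous_exp.comp (continuous_const.mul continuous_id)).mul
        (continuous_const.sub continuous_id))).intervalIntegrable 0 t
    have := intervalIntegral.integral_eq_sub_of_hasDerivAt hderiv hcont
    rw [this, hH]
    simp only [sub_self, zero_div, zero_add, Real.exp_zero, mul_one, mul_comm]
    field_simp
    simp only [mul_zero, Real.exp_zero]
    ring
  have hgval : ∫ s in (0:ℝ)..t, g s
      = L * M * (Real.exp (β * t) / β ^ 2 - t / β - 1 / β ^ 2) := by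
    rw [hg]
    rw [intervalIntegral.integral_const_mul, hExpint]
  have hJ0 : 0 ≤ Real.exp (β * t) / β ^ 2 - t / β - 1 / β ^ 2 := by
    have h1 : β * t + 1 ≤ Real.exp (β * t) := Real.add_one_le_exp (β * t)
    have hb2 : (0:ℝ) < β ^ 2 := by positivity
    have h5 : (0:ℝ) ≤ (Real.exp (β * t) - β * t - 1) / β ^ 2 :=
      div_nonneg (by linarith) hb2.le
    calc (0:ℝ) ≤ (Real.exp (β * t) - β * t - 1) / β ^ 2 := h5
      _ = Real.exp (β * t) / β ^ 2 - t / β - 1 / β ^ 2 := by field_simp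
  -- put everything together
  have hexpneg : 0 < Real.exp (-β * t) := Real.exp_pos _
  have key : Real.exp (-β * t) * (Real.exp (β * t) / β ^ 2 - t / β - 1 / β ^ 2)
      ≤ 1 / β ^ 2 := by
    have h2 : Real.exp (β * t) / β ^ 2 - t / β - 1 / β ^ 2 ≤ Real.exp (β * t) / β ^ 2 := by
      have hb2 : (0:ℝ) < β ^ 2 := by positivity
      have h3 : 0 ≤ t / β := div_nonneg ht hβ.le
      have h4 : 0 ≤ 1 / β ^ 2 := by positivity
      linarith
    calc Real.exp (-β * t) * (Real.exp (β * t) / β ^ 2 - t / β - 1 / β ^ 2)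
        ≤ Real.exp (-β * t) * (Real.exp (β * t) / β ^ 2) :=
          mul_le_mul_of_nonneg_left h2 hexpneg.le
      _ = 1 / β ^ 2 := by
          rw [mul_div_assoc', ← Real.exp_add]
          simp
  calc Real.exp (-β * t) *
        |∫ s in (0:ℝ)..t, ∫ y : ℝ, G (t - s) (x - y) * (b (u s y) - b (v s y))|
      ≤ Real.exp (-β * t) * |∫ s in (0:ℝ)..t, g s| :=
        mul_le_mul_of_nonneg_left houter hexpneg.le
    _ = Real.exp (-β * t) * (L * M * (Real.exp (β * t) / β ^ 2 - t / β - 1 / β ^ 2)) := by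
        rw [hgval, abs_of_nonneg (by positivity)]
    _ = L * M * (Real.exp (-β * t) * (Real.exp (β * t) / β ^ 2 - t / β - 1 / β ^ 2)) := by
        ring
    _ ≤ L * M * (1 / β ^ 2) := by
        apply mul_le_mul_of_nonneg_left key (by positivity)
    _ = (L / β ^ 2) * M := by ring
end
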